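/- Let f be a discrete Morse function on a path P induced by a Morse order on a merge tree T via the order isomorphism φ. Then every connected component of every sublevel complex of (P,f) corresponds under φ to a subtree of T; specifically, the image under φ of the simplices of such a component equals the set of nodes of the subtree rooted at the node with the maximal Morse label in that image. -/
import Mathlib


/-- Chirality: left or right. -/
inductive Chir : Type
  | L : Chir
  | R : Chir
  deriving DecidableEq

/-- The opposite chirality. -/
def Chir.other : Chir → Chir
  | .L => .R
  | .R => .L

/-- A merge tree: a full rooted chiral binary tree, encoded by the set of its nodes,
each node being the list of chiralities along the shortest path from the root to it
(the root is the empty list). -/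
structure MergeTree : Type where
  nodes : Finset (List Chir)
  root_mem : [] ∈ nodes
  prefix_closed : ∀ (w : List Chir) (x : Chir), w ++ [x] ∈ nodes → w ∈ nodes
  full : ∀ w : List Chir, w ++ [Chir.L] ∈ nodes ↔ w ++ [Chir.R] ∈ nodes

/-- An inner node: a node with (two) children. -/
def MergeTree.IsInner (T : MergeTree) (n : List Chir) : Prop :=
  n ∈ T.nodes ∧ n ++ [Chir.L] ∈ T.nodes

/-- A leaf node: a node without children. -/
def MergeTree.IsLeaf (T : MergeTree) (n : List Chir) : Prop :=
  n ∈ T.nodes ∧ n ++ [Chir.L] ∉ T.nodes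

/-- The chirality of a node (the root has chirality `L` by convention). -/
def chir (n : List Chir) : Chir := n.getLast?.getD Chir.L

/-- The number of inner nodes of a merge tree. -/
def MergeTree.innerCount (T : MergeTree) : ℕ :=
  (T.nodes.filter fun n => n ++ [Chir.L] ∈ T.nodes).card

/-- Auxiliary comparison of path words; the first argument is the letter at the last
position where the two words agreed (cf. "a_k = b_k"): under a common `L`, the letter
`L` precedes `R`; under a common `R`, `R` precedes `L`; shorter words are larger. -/
def leAux : Chir → List Chir → List Chir → Prop
  | _, _, [] => True
  | _, [], _ :: _ => False
  | last, x :: a, y :: b => if x = y then leAux x a b else x = last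

/-- The sublevel-connected Morse order (comparison of path words; every path word
starts with the letter `L` for the root). -/
def scLe (a b : List Chir) : Prop := leAux Chir.L a b

/-- The index Morse order: leaves below inner nodes; among leaves and among inner
nodes, compare path words. -/
def ioLe (T : MergeTree) (a b : List Chir) : Prop :=
  (T.IsLeaf a ∧ T.IsInner b) ∨
    (((T.IsLeaf a ∧ T.IsLeaf b) ∨ (T.IsInner a ∧ T.IsInner b)) ∧ scLe a b)

/-- The simplex order on the nodes of a merge tree. -/
def simpLe (a b : List Chir) : Prop :=
  a = b ∨ (b ++ [Chir.L]) <+: a ∨ (a ++ [Chir.R]) <+: b ∨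
    ∃ p : List Chir, (p ++ [Chir.L]) <+: a ∧ (p ++ [Chir.R]) <+: b

/-- A Morse order on a merge tree: a total order on the nodes that attains its maximum
at the root of each subtree and its minimum inside the child-subtree matching the
chirality of the root of the subtree. -/
def IsMorseOrder (T : MergeTree) (r : List Chir → List Chir → Prop) : Prop :=
  (∀ a ∈ T.nodes, r a a) ∧
  (∀ a ∈ T.nodes, ∀ b ∈ T.nodes, r a b → r b a → a = b) ∧
  (∀ a ∈ T.nodes, ∀ b ∈ T.nodes, ∀ c ∈ T.nodes, r a b → r b c → r a c) ∧
  (∀ a ∈ T.nodes, ∀ b ∈ T.nodes, r a b ∨ r b a) ∧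
  (∀ p ∈ T.nodes, ∀ n ∈ T.nodes, p <+: n → r n p) ∧
  (∀ p : List Chir, T.IsInner p → ∃ m ∈ T.nodes, (p ++ [chir p]) <+: m ∧
      ∀ n ∈ T.nodes, p <+: n → r m n)

/-- The Morse labeling induced by an order `r`: the unique order isomorphism from the
nodes of `T` onto `{0, 1, …, 2·i(T)}`. -/
def IsMorseLabeling (T : MergeTree) (r : List Chir → List Chir → Prop)
    (lab : List Chir → ℕ) : Prop :=
  (∀ n ∈ T.nodes, lab n < 2 * T.innerCount + 1) ∧
  (∀ k : ℕ, k < 2 * T.innerCount + 1 → ∃ n ∈ T.nodes, lab n = k) ∧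
  (∀ a ∈ T.nodes, ∀ b ∈ T.nodes, lab a = lab b → a = b) ∧
  (∀ a ∈ T.nodes, ∀ b ∈ T.nodes, (r a b ↔ lab a ≤ lab b))

/-- An order-preserving bijection from the simplices of a path with `i(T)` 1-simplices
(concretely: `Fin (2·i(T)+1)` with its linear order, which is the simplex order coming
from an orientation) to the nodes of `T` with the simplex order. -/
def IsSimplexIso (T : MergeTree) (φ : Fin (2 * T.innerCount + 1) → List Chir) : Prop :=
  (∀ i, φ i ∈ T.nodes) ∧
  (∀ n ∈ T.nodes, ∃ i, φ i = n) ∧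
  (∀ i j, i ≤ j ↔ simpLe (φ i) (φ j))

/-- A discrete Morse function, with only critical cells, on a path whose simplices are
listed left to right as `Fin N` (even indices are vertices, odd indices are edges):
injective and weakly increasing from a vertex to an incident edge. -/
def IsPathDMFallCrit {N : ℕ} {α : Type*} [LinearOrder α] (f : Fin N → α) : Prop :=
  Function.Injective f ∧
  ∀ j : ℕ, ∀ h : 2 * j + 2 < N,
    f ⟨2 * j, by omega⟩ ≤ f ⟨2 * j + 1, by omega⟩ ∧
    f ⟨2 * j + 2, by omega⟩ ≤ f ⟨2 * j + 1, by omega⟩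

lemma sing_inj {w v : List Chir} {x y : Chir} (h1 : w ++ [x] <+: v) (h2 : w ++ [y] <+: v) :
    x = y := by
  have h := List.prefix_of_prefix_length_le h1 h2 (by simp)
  have h' := h.eq_of_length (by simp)
  simpa using h'

lemma pref_step {w m a : List Chir} {c : Chir} (h1 : w ++ [c] <+: a) (h2 : m <+: a)
    (h3 : ¬ m <+: w) : w ++ [c] <+: m := by
  have hw : w <+: a := (w.prefix_append [c]).trans h1
  have hlen : w.length < m.length := by
    by_contra hle
    exact h3 (List.prefix_of_prefix_length_le h2 hw (by omega))
  exact List.prefix_of_prefix_length_le h1 h2 (by simpa using hlen)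

lemma lemA {m a b x : List Chir} (H1 : m <+: a) (H2 : m <+: b)
    (hax : simpLe a x) (hxb : simpLe x b) : m <+: x := by
  rcases hax with rfl | hLa | haR | ⟨p, hpL, hpR⟩
  · exact H1
  · -- x ++ [L] <+: a
    by_cases hmx : m <+: x
    · exact hmx
    have hxm : x ++ [Chir.L] <+: m := pref_step hLa H1 hmx
    have hxLb : x ++ [Chir.L] <+: b := hxm.trans H2
    rcases hxb with rfl | hbL | hxR | ⟨q, hqL, hqR⟩
    · exact H2
    · have l1 := hbL.length_le
      have l2 := hxm.length_le
      have l3 := H2.length_le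
      simp only [List.length_append, List.length_singleton] at l1 l2
      omega
    · exact absurd (sing_inj hxLb hxR) (by simp)
    · have hxm' : x <+: m := (x.prefix_append [Chir.L]).trans hxm
      have : q ++ [Chir.L] <+: b := (hqL.trans hxm').trans H2
      exact absurd (sing_inj this hqR) (by simp)
  · exact H1.trans ((a.prefix_append [Chir.R]).trans haR)
  · -- p++[L] <+: a, p++[R] <+: x
    by_cases hmp : m <+: p
    · exact hmp.trans ((p.prefix_append [Chir.R]).trans hpR)
    have hpLm : p ++ [Chir.L] <+: m := pref_step hpL H1 hmp
    have hpLb : p ++ [Chir.L] <+: b := hpLm.trans H2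
    rcases hxb with rfl | hbL | hxR | ⟨q, hqL, hqR⟩
    · exact absurd (sing_inj hpLb hpR) (by simp)
    · exact H2.trans ((b.prefix_append [Chir.L]).trans hbL)
    · have : p ++ [Chir.R] <+: b := (hpR.trans (x.prefix_append [Chir.R])).trans hxR
      exact absurd (sing_inj hpLb this) (by simp)
    · rcases Nat.lt_trichotomy p.length q.length with hlt | heq | hgt
      · have hq : q <+: x := (q.prefix_append [Chir.L]).trans hqL
        have h1 : p ++ [Chir.R] <+: q :=
          List.prefix_of_prefix_length_le hpR hq (by simp; omega)
        have : p ++ [Chir.R] <+: b := (h1.trans ((q.prefix_append [Chir.R]).trans hqR))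
        exact absurd (sing_inj hpLb this) (by simp)
      · have hp : p <+: x := (p.prefix_append [Chir.R]).trans hpR
        have hq : q <+: x := (q.prefix_append [Chir.L]).trans hqL
        have : p = q := (List.prefix_of_prefix_length_le hp hq (by omega)).eq_of_length heq
        subst this
        exact absurd (sing_inj hqL hpR) (by simp)
      · have hp : p <+: x := (p.prefix_append [Chir.R]).trans hpR
        have h1 : q ++ [Chir.L] <+: p :=
          List.prefix_of_prefix_length_le hqL hp (by simp; omega)
        have hpm : p <+: m := (p.prefix_append [Chir.L]).trans hpLm
        have : q ++ [Chir.L] <+: b := (h1.trans hpm).trans H2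
        exact absurd (sing_inj this hqR) (by simp)

lemma mem_of_prefix (T : MergeTree) : ∀ {n p : List Chir}, p <+: n → n ∈ T.nodes → p ∈ T.nodes := by
  intro n
  induction n using List.reverseRecOn with
  | nil =>
    intro p hp hn
    rw [List.prefix_nil.mp hp]; exact T.root_mem
  | append_singleton w x ih =>
    intro p hp hn
    by_cases hl : p.length ≤ w.length
    · exact ih (List.prefix_of_prefix_length_le hp (w.prefix_append [x]) hl)
        (T.prefix_closed w x hn)
    · have hlen : p.length = w.length + 1 := by
        have := hp.length_le; simp at this; omega
      have : p = w ++ [x] := hp.eq_of_length (by simp [hlen])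
      exact this ▸ hn

/-- For a dMf on a path induced by a Morse order on `T`, every connected component of
every sublevel complex (a maximal interval `[lo, hi]` of simplices of value `≤ c`)
corresponds under `φ` to a subtree of `T`, namely the subtree rooted at the node of
maximal Morse label in the image of the component. -/
theorem stmt11 (T : MergeTree) (r : List Chir → List Chir → Prop)
    (hr : IsMorseOrder T r) (lab : List Chir → ℕ) (hlab : IsMorseLabeling T r lab)
    (φ : Fin (2 * T.innerCount + 1) → List Chir) (hφ : IsSimplexIso T φ)
    (c : ℕ) (lo hi : Fin (2 * T.innerCount + 1)) (hlohi : lo ≤ hi)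
    (hsub : ∀ i, lo ≤ i → i ≤ hi → lab (φ i) ≤ c)
    (hmaxl : ∀ i : Fin (2 * T.innerCount + 1), i.1 + 1 = lo.1 → c < lab (φ i))
    (hmaxr : ∀ i : Fin (2 * T.innerCount + 1), hi.1 + 1 = i.1 → c < lab (φ i)) :
    ∃ i₀ : Fin (2 * T.innerCount + 1), lo ≤ i₀ ∧ i₀ ≤ hi ∧
      (∀ i, lo ≤ i → i ≤ hi → lab (φ i) ≤ lab (φ i₀)) ∧
      ∀ n ∈ T.nodes, (φ i₀ <+: n ↔ ∃ i, lo ≤ i ∧ i ≤ hi ∧ φ i = n) := by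
  obtain ⟨-, -, -, -, hr5, -⟩ := hr
  obtain ⟨-, -, hl3, hl4⟩ := hlab
  obtain ⟨hφ1, hφ2, hφ3⟩ := hφ
  obtain ⟨i₀, hi₀mem, hmax'⟩ :=
    (Finset.Icc lo hi).exists_max_image (fun i => lab (φ i))
      ⟨lo, Finset.mem_Icc.mpr ⟨le_refl lo, hlohi⟩⟩
  obtain ⟨hloi₀, hi₀hi⟩ := Finset.mem_Icc.mp hi₀mem
  have hmax : ∀ i, lo ≤ i → i ≤ hi → lab (φ i) ≤ lab (φ i₀) := fun i h1 h2 =>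
    hmax' i (Finset.mem_Icc.mpr ⟨h1, h2⟩)
  refine ⟨i₀, hloi₀, hi₀hi, hmax, ?_⟩
  -- key: any node whose index is in [lo,hi] and which is an ancestor of φ i₀ equals φ i₀
  have strict : ∀ k : Fin (2 * T.innerCount + 1), lo ≤ k → k ≤ hi →
      φ k <+: φ i₀ → φ k = φ i₀ := by
    intro k h1 h2 hpre
    refine hl3 _ (hφ1 k) _ (hφ1 i₀) (le_antisymm ?_ ?_)
    · exact hmax k h1 h2
    · exact (hl4 _ (hφ1 i₀) _ (hφ1 k)).mp (hr5 _ (hφ1 k) _ (hφ1 i₀) hpre)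
  -- every index in [lo,hi] maps to a descendant of φ i₀
  have hdesc : ∀ j : Fin (2 * T.innerCount + 1), lo ≤ j → j ≤ hi → φ i₀ <+: φ j := by
    intro j h1 h2
    rcases le_total j i₀ with hji | hij
    · rcases (hφ3 j i₀).mp hji with heq | hL | hR | ⟨p, hpL, hpR⟩
      · exact heq ▸ List.prefix_refl _
      · exact (List.prefix_append _ _).trans hL
      · have hpre : φ j <+: φ i₀ := (List.prefix_append _ _).trans hR
        have := strict j h1 h2 hpre
        rw [this] at hR
        have := hR.length_le; simp at this
      · have hpmem : p ∈ T.nodes :=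
          mem_of_prefix T ((List.prefix_append _ _).trans hpR) (hφ1 i₀)
        obtain ⟨k, hk⟩ := hφ2 p hpmem
        have hjk : j ≤ k := (hφ3 j k).mpr (Or.inr (Or.inl (hk ▸ hpL)))
        have hki : k ≤ i₀ := (hφ3 k i₀).mpr (Or.inr (Or.inr (Or.inl (hk ▸ hpR))))
        have hpre : φ k <+: φ i₀ := hk ▸ (List.prefix_append _ _).trans hpR
        have := strict k (le_trans h1 hjk) (le_trans hki hi₀hi) hpre
        rw [hk] at this
        rw [this] at hpR
        have := hpR.length_le; simp at this
    · rcases (hφ3 i₀ j).mp hij with heq | hL | hR | ⟨p, hpL, hpR⟩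
      · exact heq ▸ List.prefix_refl _
      · have hpre : φ j <+: φ i₀ := (List.prefix_append _ _).trans hL
        have := strict j h1 h2 hpre
        rw [this] at hL
        have := hL.length_le; simp at this
      · exact (List.prefix_append _ _).trans hR
      · have hpmem : p ∈ T.nodes :=
          mem_of_prefix T ((List.prefix_append _ _).trans hpL) (hφ1 i₀)
        obtain ⟨k, hk⟩ := hφ2 p hpmem
        have hik : i₀ ≤ k := (hφ3 i₀ k).mpr (Or.inr (Or.inl (hk ▸ hpL)))
        have hkj : k ≤ j := (hφ3 k j).mpr (Or.inr (Or.inr (Or.inl (hk ▸ hpR))))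
        have hpre : φ k <+: φ i₀ := hk ▸ (List.prefix_append _ _).trans hpL
        have := strict k (le_trans hloi₀ hik) (le_trans hkj h2) hpre
        rw [hk] at this
        rw [this] at hpL
        have := hpL.length_le; simp at this
  intro n hn
  constructor
  · intro hpre
    obtain ⟨j, hj⟩ := hφ2 n hn
    refine ⟨j, ?_, ?_, hj⟩
    · by_contra hcon
      have hjlo : j.1 < lo.1 := by
        rw [Fin.le_def] at hcon; omega
      have hlo1 : 0 < lo.1 := by omega
      set k : Fin (2 * T.innerCount + 1) := ⟨lo.1 - 1, by omega⟩ with hkdef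
      have hck : c < lab (φ k) := hmaxl k (by simp [hkdef]; omega)
      have hjk : j ≤ k := by rw [Fin.le_def]; simp [hkdef]; omega
      have hki : k ≤ i₀ := by
        rw [Fin.le_def]; rw [Fin.le_def] at hloi₀; simp [hkdef]; omega
      have hmk : φ i₀ <+: φ k :=
        lemA (hj ▸ hpre) (List.prefix_refl _) ((hφ3 j k).mp hjk) ((hφ3 k i₀).mp hki)
      have : lab (φ k) ≤ lab (φ i₀) :=
        (hl4 _ (hφ1 k) _ (hφ1 i₀)).mp (hr5 _ (hφ1 i₀) _ (hφ1 k) hmk)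
      have := hsub i₀ hloi₀ hi₀hi
      omega
    · by_contra hcon
      have hhij : hi.1 < j.1 := by
        rw [Fin.le_def] at hcon; omega
      set k : Fin (2 * T.innerCount + 1) := ⟨hi.1 + 1, by omega⟩ with hkdef
      have hck : c < lab (φ k) := hmaxr k (by simp [hkdef])
      have hik : i₀ ≤ k := by
        rw [Fin.le_def]; rw [Fin.le_def] at hi₀hi; simp [hkdef]; omega
      have hkj : k ≤ j := by rw [Fin.le_def]; simp [hkdef]; omega
      have hmk : φ i₀ <+: φ k :=
        lemA (List.prefix_refl _) (hj ▸ hpre) ((hφ3 i₀ k).mp hik) ((hφ3 k j).mp hkj)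
      have : lab (φ k) ≤ lab (φ i₀) :=
        (hl4 _ (hφ1 k) _ (hφ1 i₀)).mp (hr5 _ (hφ1 i₀) _ (hφ1 k) hmk)
      have := hsub i₀ hloi₀ hi₀hi
      omega
  · rintro ⟨i, h1, h2, rfl⟩
    exact hdesc i h1 h2
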